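/- Fix reals a, b > 0, k > 0, exponents 1 < q < p, l > p(k+1), and λ > 0. Let A > 0 and F, G ∈ ℝ with F > 0 and G ≤ 0, and define φ : (0,∞) → ℝ by φ(t) = (a/(p(k+1)))·A^{k+1}·t^{p(k+1)} + (b/p)·A·t^p − (λ/q)·F·t^q − (1/l)·G·t^l. Then there exists a unique t₁ > 0 with φ'(t₁) = 0; moreover φ'(t) < 0 for 0 < t < t₁ and φ'(t) > 0 for t > t₁, φ''(t₁) > 0, φ(t₁) = inf_{t>0} φ(t) < 0, and φ(t) → +∞ as t → +∞. -/

import Mathlib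

open Real Filter Set

/-- Abstract form of the fibering map. -/
noncomputable def Pfun (c1 c2 c3 c4 α p q l t : ℝ) : ℝ :=
  c1 * t ^ α + c2 * t ^ p - c3 * t ^ q - c4 * t ^ l

/-- Its derivative. -/
noncomputable def psiFun (c1 c2 c3 c4 α p q l t : ℝ) : ℝ :=
  c1 * α * t ^ (α - 1) + c2 * p * t ^ (p - 1) - c3 * q * t ^ (q - 1)
    - c4 * l * t ^ (l - 1)

/-- Derivative with `t^(q-1)` factored out. -/
noncomputable def gFun (c1 c2 c3 c4 α p q l t : ℝ) : ℝ :=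
  c1 * α * t ^ (α - q) + c2 * p * t ^ (p - q) - c3 * q - c4 * l * t ^ (l - q)

lemma tendsto_rpow_zero_right {e : ℝ} (he : 0 < e) :
    Tendsto (fun t : ℝ => t ^ e) (nhdsWithin 0 (Ioi 0)) (nhds 0) := by
  have h := (Real.continuousAt_rpow_const 0 e (Or.inr he.le)).continuousWithinAt
    (s := Ioi (0:ℝ))
  simpa [ContinuousWithinAt, Real.zero_rpow he.ne'] using h

lemma tendsto_zero_aux (d1 d2 d4 e1 e2 e4 C : ℝ) (he1 : 0 < e1) (he2 : 0 < e2)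
    (he4 : 0 < e4) :
    Tendsto (fun t : ℝ => d1 * t ^ e1 + d2 * t ^ e2 - C - d4 * t ^ e4)
      (nhdsWithin 0 (Ioi 0)) (nhds (-C)) := by
  have h1 := (tendsto_rpow_zero_right he1).const_mul d1
  have h2 := (tendsto_rpow_zero_right he2).const_mul d2
  have h4 := (tendsto_rpow_zero_right he4).const_mul d4
  have := ((h1.add h2).sub tendsto_const_nhds (b := C)).sub h4
  simpa using this

set_option maxHeartbeats 1600000 in
theorem main_aux (c1 c2 c3 c4 α p q l : ℝ)
    (hc1 : 0 < c1) (hc2 : 0 < c2) (hc3 : 0 < c3) (hc4 : c4 ≤ 0)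
    (hq : 1 < q) (hqp : q < p) (hpα : p < α) (hαl : α < l) :
    ∃ t₁ : ℝ, 0 < t₁ ∧ deriv (Pfun c1 c2 c3 c4 α p q l) t₁ = 0 ∧
      (∀ t : ℝ, 0 < t → deriv (Pfun c1 c2 c3 c4 α p q l) t = 0 → t = t₁) ∧
      (∀ t : ℝ, 0 < t → t < t₁ → deriv (Pfun c1 c2 c3 c4 α p q l) t < 0) ∧
      (∀ t : ℝ, t₁ < t → 0 < deriv (Pfun c1 c2 c3 c4 α p q l) t) ∧
      0 < deriv (deriv (Pfun c1 c2 c3 c4 α p q l)) t₁ ∧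
      (∀ t : ℝ, 0 < t →
        Pfun c1 c2 c3 c4 α p q l t₁ ≤ Pfun c1 c2 c3 c4 α p q l t) ∧
      Pfun c1 c2 c3 c4 α p q l t₁ < 0 ∧
      Tendsto (Pfun c1 c2 c3 c4 α p q l) atTop atTop := by
  have hp1 : 1 < p := hq.trans hqp
  have hα1 : 1 < α := hp1.trans hpα
  have hl1 : 1 < l := hα1.trans hαl
  have hq0 : (0:ℝ) < q := by linarith
  have hα0 : (0:ℝ) < α := by linarith
  have hl0 : (0:ℝ) < l := by linarith
  have hαq : (0:ℝ) < α - q := by linarith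
  have hpq : (0:ℝ) < p - q := by linarith
  have hlq : (0:ℝ) < l - q := by linarith
  have hc4l : 0 ≤ -(c4 * l) := by nlinarith
  -- derivative of Pfun is psiFun everywhere
  have hd : ∀ t : ℝ, HasDerivAt (Pfun c1 c2 c3 c4 α p q l)
      (psiFun c1 c2 c3 c4 α p q l t) t := by
    intro t
    have h1 : HasDerivAt (fun s : ℝ => s ^ α) (α * t ^ (α - 1)) t :=
      Real.hasDerivAt_rpow_const (Or.inr hα1.le)
    have h2 : HasDerivAt (fun s : ℝ => s ^ p) (p * t ^ (p - 1)) t :=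
      Real.hasDerivAt_rpow_const (Or.inr hp1.le)
    have h3 : HasDerivAt (fun s : ℝ => s ^ q) (q * t ^ (q - 1)) t :=
      Real.hasDerivAt_rpow_const (Or.inr hq.le)
    have h4 : HasDerivAt (fun s : ℝ => s ^ l) (l * t ^ (l - 1)) t :=
      Real.hasDerivAt_rpow_const (Or.inr hl1.le)
    have h5 := (((h1.const_mul c1).add (h2.const_mul c2)).sub
      (h3.const_mul c3)).sub (h4.const_mul c4)
    have heq : psiFun c1 c2 c3 c4 α p q l t
        = c1 * (α * t ^ (α - 1)) + c2 * (p * t ^ (p - 1))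
          - c3 * (q * t ^ (q - 1)) - c4 * (l * t ^ (l - 1)) := by
      simp only [psiFun]; ring
    rw [heq]
    exact h5
  have hderiv : deriv (Pfun c1 c2 c3 c4 α p q l) = psiFun c1 c2 c3 c4 α p q l :=
    funext fun t => (hd t).deriv
  -- factorization
  have hfac : ∀ t : ℝ, 0 < t →
      psiFun c1 c2 c3 c4 α p q l t = t ^ (q - 1) * gFun c1 c2 c3 c4 α p q l t := by
    intro t ht
    have e1 : t ^ (q - 1) * t ^ (α - q) = t ^ (α - 1) := by
      rw [← Real.rpow_add ht]; congr 1; ring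
    have e2 : t ^ (q - 1) * t ^ (p - q) = t ^ (p - 1) := by
      rw [← Real.rpow_add ht]; congr 1; ring
    have e3 : t ^ (q - 1) * t ^ (l - q) = t ^ (l - 1) := by
      rw [← Real.rpow_add ht]; congr 1; ring
    simp only [psiFun, gFun]
    linear_combination (-(c1 * α)) * e1 + (-(c2 * p)) * e2 + (c4 * l) * e3
  -- strict monotonicity of gFun on (0,∞)
  have gmono : StrictMonoOn (gFun c1 c2 c3 c4 α p q l) (Ioi 0) := by
    intro x hx y hy hxy
    simp only [gFun]
    have hx0 : (0:ℝ) < x := hx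
    have h1 : x ^ (α - q) < y ^ (α - q) := Real.rpow_lt_rpow hx0.le hxy hαq
    have h2 : x ^ (p - q) < y ^ (p - q) := Real.rpow_lt_rpow hx0.le hxy hpq
    have h3 : x ^ (l - q) ≤ y ^ (l - q) :=
      Real.rpow_le_rpow hx0.le hxy.le hlq.le
    have hc1α : (0:ℝ) < c1 * α := by positivity
    have hc2p : (0:ℝ) < c2 * p := by positivity
    have k1 := mul_lt_mul_of_pos_left h1 hc1α
    have k2 := mul_lt_mul_of_pos_left h2 hc2p
    have k3 := mul_le_mul_of_nonneg_left h3 hc4l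
    nlinarith
  -- continuity of gFun on (0, ∞)
  have gcont : ContinuousOn (gFun c1 c2 c3 c4 α p q l) (Ioi 0) := by
    intro x hx
    have hx0 : x ≠ 0 := ne_of_gt hx
    have h1 : ContinuousAt (fun t : ℝ => t ^ (α - q)) x :=
      Real.continuousAt_rpow_const x _ (Or.inl hx0)
    have h2 : ContinuousAt (fun t : ℝ => t ^ (p - q)) x :=
      Real.continuousAt_rpow_const x _ (Or.inl hx0)
    have h3 : ContinuousAt (fun t : ℝ => t ^ (l - q)) x :=
      Real.continuousAt_rpow_const x _ (Or.inl hx0)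
    exact ((((continuousAt_const.mul h1).add
      (continuousAt_const.mul h2)).sub continuousAt_const).sub
      (continuousAt_const.mul h3)).continuousWithinAt
  -- gFun tends to -(c3*q) at 0⁺
  have g0 : Tendsto (gFun c1 c2 c3 c4 α p q l) (nhdsWithin 0 (Ioi 0))
      (nhds (-(c3 * q))) :=
    tendsto_zero_aux (c1 * α) (c2 * p) (c4 * l) (α - q) (p - q) (l - q)
      (c3 * q) hαq hpq hlq
  -- find ε with g ε < 0
  obtain ⟨ε, hgε, hε⟩ := ((g0.eventually_lt_const (by nlinarith :
      -(c3 * q) < 0)).and self_mem_nhdsWithin).exists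
  have hε0 : (0:ℝ) < ε := hε
  -- gFun tends to atTop
  have gtop : Tendsto (gFun c1 c2 c3 c4 α p q l) atTop atTop := by
    have hbase : Tendsto (fun t : ℝ => c1 * α * t ^ (α - q) - c3 * q) atTop atTop := by
      have h := (tendsto_rpow_atTop hαq).const_mul_atTop
        (show (0:ℝ) < c1 * α by positivity)
      have h' := tendsto_atTop_add_const_right atTop (-(c3 * q)) h
      exact h'.congr fun t => by ring
    refine tendsto_atTop_mono' atTop ?_ hbase
    filter_upwards [eventually_gt_atTop (0:ℝ)] with t ht
    simp only [gFun]
    have h2 : 0 ≤ c2 * p * t ^ (p - q) := by positivity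
    have h3 : 0 ≤ -(c4 * l) * t ^ (l - q) := by
      have := Real.rpow_pos_of_pos ht (l - q); nlinarith
    nlinarith
  -- find T with g T > 0 and ε ≤ T
  obtain ⟨T, hgT, hεT⟩ := ((gtop.eventually (eventually_gt_atTop 0)).and
    (eventually_ge_atTop ε)).exists
  -- IVT to get t₁
  obtain ⟨t₁, ht₁mem, hgt₁⟩ := intermediate_value_Icc hεT
    (gcont.mono (fun x hx => lt_of_lt_of_le hε0 hx.1)) ⟨hgε.le, hgT.le⟩
  have ht₁ : (0:ℝ) < t₁ := lt_of_lt_of_le hε0 ht₁mem.1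
  have ht₁' : t₁ ∈ Ioi (0:ℝ) := ht₁
  -- sign of the derivative
  have hψneg : ∀ t : ℝ, 0 < t → t < t₁ →
      deriv (Pfun c1 c2 c3 c4 α p q l) t < 0 := by
    intro t ht htt
    rw [hderiv, hfac t ht]
    have hg : gFun c1 c2 c3 c4 α p q l t < 0 := by
      have := gmono ht ht₁' htt
      rw [hgt₁] at this; exact this
    exact mul_neg_of_pos_of_neg (Real.rpow_pos_of_pos ht _) hg
  have hψpos : ∀ t : ℝ, t₁ < t → 0 < deriv (Pfun c1 c2 c3 c4 α p q l) t := by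
    intro t htt
    have ht : (0:ℝ) < t := ht₁.trans htt
    rw [hderiv, hfac t ht]
    have hg : 0 < gFun c1 c2 c3 c4 α p q l t := by
      have := gmono ht₁' ht htt
      rw [hgt₁] at this; exact this
    exact mul_pos (Real.rpow_pos_of_pos ht _) hg
  have hcrit : deriv (Pfun c1 c2 c3 c4 α p q l) t₁ = 0 := by
    rw [hderiv, hfac t₁ ht₁, hgt₁, mul_zero]
  have huniq : ∀ t : ℝ, 0 < t → deriv (Pfun c1 c2 c3 c4 α p q l) t = 0 → t = t₁ := by
    intro t ht h0
    rw [hderiv, hfac t ht] at h0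
    have hg : gFun c1 c2 c3 c4 α p q l t = 0 := by
      rcases mul_eq_zero.mp h0 with h | h
      · exact absurd h (ne_of_gt (Real.rpow_pos_of_pos ht _))
      · exact h
    exact gmono.injOn ht ht₁' (by rw [hg, hgt₁])
  -- second derivative at t₁
  have hsecond : 0 < deriv (deriv (Pfun c1 c2 c3 c4 α p q l)) t₁ := by
    rw [hderiv]
    have h1 : HasDerivAt (fun s : ℝ => s ^ (α - 1)) ((α - 1) * t₁ ^ (α - 1 - 1)) t₁ :=
      Real.hasDerivAt_rpow_const (Or.inl ht₁.ne')
    have h2 : HasDerivAt (fun s : ℝ => s ^ (p - 1)) ((p - 1) * t₁ ^ (p - 1 - 1)) t₁ :=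
      Real.hasDerivAt_rpow_const (Or.inl ht₁.ne')
    have h3 : HasDerivAt (fun s : ℝ => s ^ (q - 1)) ((q - 1) * t₁ ^ (q - 1 - 1)) t₁ :=
      Real.hasDerivAt_rpow_const (Or.inl ht₁.ne')
    have h4 : HasDerivAt (fun s : ℝ => s ^ (l - 1)) ((l - 1) * t₁ ^ (l - 1 - 1)) t₁ :=
      Real.hasDerivAt_rpow_const (Or.inl ht₁.ne')
    have h5 := (((h1.const_mul (c1 * α)).add (h2.const_mul (c2 * p))).sub
      (h3.const_mul (c3 * q))).sub (h4.const_mul (c4 * l))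
    have h6 : HasDerivAt (psiFun c1 c2 c3 c4 α p q l)
        (c1 * α * ((α - 1) * t₁ ^ (α - 1 - 1)) + c2 * p * ((p - 1) * t₁ ^ (p - 1 - 1))
          - c3 * q * ((q - 1) * t₁ ^ (q - 1 - 1))
          - c4 * l * ((l - 1) * t₁ ^ (l - 1 - 1))) t₁ := h5
    rw [h6.deriv]
    -- use gFun t₁ = 0
    have hg0 : c1 * α * t₁ ^ (α - q) + c2 * p * t₁ ^ (p - q) - c3 * q
        - c4 * l * t₁ ^ (l - q) = 0 := hgt₁
    have e1 : t₁ ^ (α - q) * t₁ ^ (q - 1 - 1) = t₁ ^ (α - 1 - 1) := by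
      rw [← Real.rpow_add ht₁]; congr 1; ring
    have e2 : t₁ ^ (p - q) * t₁ ^ (q - 1 - 1) = t₁ ^ (p - 1 - 1) := by
      rw [← Real.rpow_add ht₁]; congr 1; ring
    have e3 : t₁ ^ (l - q) * t₁ ^ (q - 1 - 1) = t₁ ^ (l - 1 - 1) := by
      rw [← Real.rpow_add ht₁]; congr 1; ring
    have hDeq : c1 * α * ((α - 1) * t₁ ^ (α - 1 - 1)) + c2 * p * ((p - 1) * t₁ ^ (p - 1 - 1))
          - c3 * q * ((q - 1) * t₁ ^ (q - 1 - 1))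
          - c4 * l * ((l - 1) * t₁ ^ (l - 1 - 1))
        = c1 * α * (α - q) * t₁ ^ (α - 1 - 1) + c2 * p * (p - q) * t₁ ^ (p - 1 - 1)
          - c4 * l * (l - q) * t₁ ^ (l - 1 - 1) := by
      linear_combination ((q - 1) * t₁ ^ (q - 1 - 1)) * hg0
        + (-(q - 1) * c1 * α) * e1 + (-(q - 1) * c2 * p) * e2 + ((q - 1) * c4 * l) * e3
    rw [hDeq]
    have T1 : 0 < t₁ ^ (α - 1 - 1) := Real.rpow_pos_of_pos ht₁ _
    have T2 : 0 < t₁ ^ (p - 1 - 1) := Real.rpow_pos_of_pos ht₁ _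
    have T3 : 0 < t₁ ^ (l - 1 - 1) := Real.rpow_pos_of_pos ht₁ _
    nlinarith [mul_pos (mul_pos (mul_pos hc1 hα0) hαq) T1,
      mul_pos (mul_pos (mul_pos hc2 (by linarith : (0:ℝ) < p)) hpq) T2,
      mul_le_mul_of_nonneg_left T3.le (mul_nonneg hc4l hlq.le)]
  -- continuity of Pfun
  have Pcont : Continuous (Pfun c1 c2 c3 c4 α p q l) := by
    have : Differentiable ℝ (Pfun c1 c2 c3 c4 α p q l) :=
      fun t => (hd t).differentiableAt
    exact this.continuous
  -- global minimum on (0, ∞)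
  have hmin : ∀ t : ℝ, 0 < t →
      Pfun c1 c2 c3 c4 α p q l t₁ ≤ Pfun c1 c2 c3 c4 α p q l t := by
    intro t ht
    rcases lt_trichotomy t t₁ with h | h | h
    · have hanti : StrictAntiOn (Pfun c1 c2 c3 c4 α p q l) (Icc t t₁) := by
        apply strictAntiOn_of_deriv_neg (convex_Icc t t₁) Pcont.continuousOn
        intro x hx
        rw [interior_Icc] at hx
        exact hψneg x (ht.trans hx.1) hx.2
      exact (hanti (left_mem_Icc.mpr h.le) (right_mem_Icc.mpr h.le) h).le
    · rw [h]
    · have hmono : StrictMonoOn (Pfun c1 c2 c3 c4 α p q l) (Icc t₁ t) := by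
        apply strictMonoOn_of_deriv_pos (convex_Icc t₁ t) Pcont.continuousOn
        intro x hx
        rw [interior_Icc] at hx
        exact hψpos x hx.1
      exact (hmono (left_mem_Icc.mpr h.le) (right_mem_Icc.mpr h.le) h).le
  -- negative value
  have hneg : Pfun c1 c2 c3 c4 α p q l t₁ < 0 := by
    have h0 : Tendsto (fun t : ℝ => c1 * t ^ (α - q) + c2 * t ^ (p - q) - c3
        - c4 * t ^ (l - q)) (nhdsWithin 0 (Ioi 0)) (nhds (-c3)) :=
      tendsto_zero_aux c1 c2 c4 (α - q) (p - q) (l - q) c3 hαq hpq hlq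
    obtain ⟨s, hs1, hs2⟩ := ((h0.eventually_lt_const (by linarith : -c3 < 0)).and
      self_mem_nhdsWithin).exists
    have hs0 : (0:ℝ) < s := hs2
    have hPs : Pfun c1 c2 c3 c4 α p q l s
        = s ^ q * (c1 * s ^ (α - q) + c2 * s ^ (p - q) - c3 - c4 * s ^ (l - q)) := by
      have e1 : s ^ q * s ^ (α - q) = s ^ α := by
        rw [← Real.rpow_add hs0]; congr 1; ring
      have e2 : s ^ q * s ^ (p - q) = s ^ p := by
        rw [← Real.rpow_add hs0]; congr 1; ring
      have e3 : s ^ q * s ^ (l - q) = s ^ l := by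
        rw [← Real.rpow_add hs0]; congr 1; ring
      simp only [Pfun]
      linear_combination (-c1) * e1 + (-c2) * e2 + c4 * e3
    have : Pfun c1 c2 c3 c4 α p q l s < 0 := by
      rw [hPs]
      exact mul_neg_of_pos_of_neg (Real.rpow_pos_of_pos hs0 _) hs1
    exact lt_of_le_of_lt (hmin s hs0) this
  -- tendsto atTop
  have htop : Tendsto (Pfun c1 c2 c3 c4 α p q l) atTop atTop := by
    have hq' : Tendsto (fun t : ℝ => t ^ q) atTop atTop := tendsto_rpow_atTop hq0
    have hbase : Tendsto (fun t : ℝ => c1 * t ^ (α - q) - c3) atTop atTop := by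
      have h := (tendsto_rpow_atTop hαq).const_mul_atTop hc1
      have h' := tendsto_atTop_add_const_right atTop (-c3) h
      exact h'.congr fun t => by ring
    have hprod := hq'.atTop_mul_atTop₀ hbase
    refine tendsto_atTop_mono' atTop ?_ hprod
    filter_upwards [eventually_gt_atTop (0:ℝ)] with t ht
    have e1 : t ^ q * t ^ (α - q) = t ^ α := by
      rw [← Real.rpow_add ht]; congr 1; ring
    have hlhs : t ^ q * (c1 * t ^ (α - q) - c3) = c1 * t ^ α - c3 * t ^ q := by
      linear_combination c1 * e1
    rw [hlhs]
    simp only [Pfun]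
    have h2 : 0 ≤ c2 * t ^ p := by positivity
    have h3 : 0 ≤ -(c4 * t ^ l) := by
      have := Real.rpow_pos_of_pos ht l; nlinarith
    linarith
  exact ⟨t₁, ht₁, hcrit, huniq, hψneg, hψpos, hsecond, hmin, hneg, htop⟩

/-- The fibering map of the Euler functional, as a scalar function of the
parameters `A = ‖u‖_{E_p}^p`, `F = ∫ f|u|^q dμ`, `G = ∫ g|u|^l dμ`. -/
noncomputable def phi (a b k p q l lam A F G t : ℝ) : ℝ :=
  a / (p * (k + 1)) * A ^ (k + 1) * t ^ (p * (k + 1))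
    + b / p * A * t ^ p - lam / q * F * t ^ q - 1 / l * G * t ^ l

/-- Case II of the fibering map analysis: if `F > 0` and `G ≤ 0`,
the fibering map has a unique positive critical point `t₁`, which is a strict
local (indeed global on `(0,∞)`) minimum with negative value, and `φ(t) → +∞`
as `t → +∞`. -/
theorem stmt_4 (a b k p q l lam A F G : ℝ)
    (ha : 0 < a) (hb : 0 < b) (hk : 0 < k)
    (hq : 1 < q) (hqp : q < p) (hl : p * (k + 1) < l) (hlam : 0 < lam)
    (hA : 0 < A) (hF : 0 < F) (hG : G ≤ 0) :
    ∃ t₁ : ℝ, 0 < t₁ ∧ deriv (phi a b k p q l lam A F G) t₁ = 0 ∧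
      (∀ t : ℝ, 0 < t → deriv (phi a b k p q l lam A F G) t = 0 → t = t₁) ∧
      (∀ t : ℝ, 0 < t → t < t₁ → deriv (phi a b k p q l lam A F G) t < 0) ∧
      (∀ t : ℝ, t₁ < t → 0 < deriv (phi a b k p q l lam A F G) t) ∧
      0 < deriv (deriv (phi a b k p q l lam A F G)) t₁ ∧
      (∀ t : ℝ, 0 < t →
        phi a b k p q l lam A F G t₁ ≤ phi a b k p q l lam A F G t) ∧
      phi a b k p q l lam A F G t₁ < 0 ∧
      Filter.Tendsto (phi a b k p q l lam A F G) Filter.atTop Filter.atTop := by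
  have hp1 : 1 < p := hq.trans hqp
  have hk1 : (0:ℝ) < p * (k + 1) := by nlinarith
  have hP : phi a b k p q l lam A F G
      = Pfun (a / (p * (k + 1)) * A ^ (k + 1)) (b / p * A) (lam / q * F) (1 / l * G)
        (p * (k + 1)) p q l := by
    funext t; simp only [phi, Pfun]
  have hl0 : (0:ℝ) < l := lt_trans hk1 hl
  have hc1 : 0 < a / (p * (k + 1)) * A ^ (k + 1) := by
    have := Real.rpow_pos_of_pos hA (k + 1)
    positivity
  have hc2 : 0 < b / p * A := by positivity
  have hc3 : 0 < lam / q * F := by positivity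
  have hc4 : 1 / l * G ≤ 0 := by
    have h1 : 0 < 1 / l := by positivity
    nlinarith
  have hpα : p < p * (k + 1) := by nlinarith
  rw [hP]
  exact main_aux _ _ _ _ _ _ _ _ hc1 hc2 hc3 hc4 hq hqp hpα hl
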